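/- arXiv:2307.16736 — 3 statements merged into one kernel-verified Lean document; each statement's English description precedes it below -/
import Mathlib

section
/- For every real $a > 0$ and every real $x$ with $0 < x \leq 1$, the Bessel function of the first kind satisfies $x^a J_a(a) \leq J_a(ax) \leq e^{a(1-x)} x^a J_a(a)$; in particular $J_a(ax) > 0$ whenever $J_a(a) > 0$. -/
/-- The Bessel function of the first kind of (real) order `a`, defined by its power
series `J_a(z) = ∑ₘ (-1)^m / (m! Γ(m+a+1)) (z/2)^(2m+a)`. -/
noncomputable def besselJ (a x : ℝ) : ℝ :=
  ∑' m : ℕ, ((-1 : ℝ) ^ m / ((m.factorial : ℝ) * Real.Gamma ((m : ℝ) + a + 1))) *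
    (x / 2) ^ (2 * (m : ℝ) + a)

open Real Filter Set Topology

noncomputable def besselC (b : ℝ) (m : ℕ) : ℝ :=
  (-1 : ℝ) ^ m / ((m.factorial : ℝ) * Real.Gamma ((m : ℝ) + b + 1))

noncomputable def phi (b t : ℝ) : ℝ := ∑' m : ℕ, besselC b m * t ^ m

lemma fact_gamma_le (b : ℝ) (hb : 0 < b) :
    ∀ m : ℕ, (m.factorial : ℝ) * Real.Gamma (b + 1) ≤ Real.Gamma ((m : ℝ) + b + 1) := by
  intro m
  induction m with
  | zero => simp
  | succ m ih =>
    have h1 : ((m : ℝ) + b + 1) ≠ 0 := by positivity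
    have h2 : Real.Gamma (((m : ℕ) : ℝ) + b + 1 + 1) = ((m : ℝ) + b + 1) * Real.Gamma ((m : ℝ) + b + 1) :=
      Real.Gamma_add_one h1
    have h3 : (((m + 1 : ℕ) : ℝ) + b + 1) = ((m : ℝ) + b + 1) + 1 := by push_cast; ring
    rw [h3, h2]
    have hΓpos : 0 < Real.Gamma ((m : ℝ) + b + 1) := Real.Gamma_pos_of_pos (by positivity)
    have : ((m + 1 : ℕ) : ℝ) ≤ (m : ℝ) + b + 1 := by push_cast; linarith
    calc ((m+1).factorial : ℝ) * Real.Gamma (b+1)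
        = ((m+1 : ℕ) : ℝ) * ((m.factorial : ℝ) * Real.Gamma (b+1)) := by
          push_cast [Nat.factorial_succ]; ring
      _ ≤ (((m : ℝ) + b + 1)) * Real.Gamma ((m : ℝ) + b + 1) := by
          apply mul_le_mul this ih (by positivity) (by positivity)

lemma besselC_abs_le (b : ℝ) (hb : 0 < b) (m : ℕ) :
    |besselC b m| ≤ (1 / Real.Gamma (b + 1)) * (1 / m.factorial) := by
  have hΓpos : 0 < Real.Gamma ((m : ℝ) + b + 1) := Real.Gamma_pos_of_pos (by positivity)
  have hfp : (0:ℝ) < m.factorial := by positivity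
  have hle := fact_gamma_le b hb m
  have hΓb : 0 < Real.Gamma (b + 1) := Real.Gamma_pos_of_pos (by positivity)
  rw [besselC, abs_div, abs_pow, abs_neg, abs_one, one_pow]
  rw [abs_of_pos (by positivity : (0:ℝ) < (m.factorial : ℝ) * Real.Gamma ((m:ℝ)+b+1))]
  rw [div_le_iff₀ (by positivity)]
  have h1 : (1:ℝ) ≤ m.factorial := by exact_mod_cast Nat.one_le_iff_ne_zero.2 m.factorial_ne_zero
  calc (1:ℝ) = (1 / Real.Gamma (b+1)) * (1/ m.factorial) * ((m.factorial : ℝ) * ((m.factorial:ℝ) * Real.Gamma (b+1))) * (1 / m.factorial) := by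
        field_simp
    _ ≤ (1 / Real.Gamma (b+1)) * (1/ m.factorial) * ((m.factorial : ℝ) * Real.Gamma ((m:ℝ)+b+1)) * 1 := by
        apply mul_le_mul _ (by rw [div_le_one hfp]; exact h1) (by positivity) (by positivity)
        apply mul_le_mul_of_nonneg_left _ (by positivity)
        exact mul_le_mul_of_nonneg_left hle (by positivity)
    _ = (1 / Real.Gamma (b+1)) * (1/ m.factorial) * ((m.factorial : ℝ) * Real.Gamma ((m:ℝ)+b+1)) := by ring

lemma summable_phi (b : ℝ) (hb : 0 < b) (t : ℝ) :
    Summable (fun m : ℕ => besselC b m * t ^ m) := by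
  apply Summable.of_norm_bounded (g := fun m : ℕ => (1 / Real.Gamma (b+1)) * (|t| ^ m / m.factorial))
  · exact (Real.summable_pow_div_factorial |t|).mul_left _
  · intro m
    rw [norm_mul, norm_pow, Real.norm_eq_abs, Real.norm_eq_abs]
    calc |besselC b m| * |t| ^ m ≤ ((1 / Real.Gamma (b+1)) * (1 / m.factorial)) * |t| ^ m :=
          mul_le_mul_of_nonneg_right (besselC_abs_le b hb m) (by positivity)
      _ = (1 / Real.Gamma (b+1)) * (|t| ^ m / m.factorial) := by ring

lemma phi_zero (b : ℝ) : phi b 0 = 1 / Real.Gamma (b + 1) := by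
  rw [phi, tsum_eq_single 0 (fun m hm => by simp [pow_eq_zero_iff, hm])]
  simp [besselC]

lemma phi_zero_pos (b : ℝ) (hb : 0 < b) : 0 < phi b 0 := by
  rw [phi_zero]; positivity

lemma besselC_succ (b : ℝ) (hb : 0 < b) (m : ℕ) :
    ((m : ℝ) + 1) * besselC b (m + 1) = -besselC (b + 1) m := by
  have h : ((m + 1 : ℕ) : ℝ) + b + 1 = (m : ℝ) + (b + 1) + 1 := by push_cast; ring
  have hΓ : Real.Gamma ((m : ℝ) + (b + 1) + 1) ≠ 0 := by
    have h2 : (0:ℝ) < (m : ℝ) + (b + 1) + 1 := by positivity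
    exact (Real.Gamma_pos_of_pos h2).ne'
  rw [besselC, besselC, h, Nat.factorial_succ, pow_succ]
  push_cast
  field_simp

lemma summable_deriv_bound (b : ℝ) (hb : 0 < b) (R : ℝ) :
    Summable (fun n : ℕ => (1 / Real.Gamma (b+1)) * ((n : ℝ) * R ^ (n-1) / n.factorial)) := by
  apply Summable.mul_left
  have h : Summable (fun n : ℕ => ((n+1 : ℕ) : ℝ) * R ^ ((n+1)-1) / (n+1).factorial) := by
    have he : (fun n : ℕ => ((n+1 : ℕ) : ℝ) * R ^ ((n+1)-1) / (n+1).factorial)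
        = fun n : ℕ => R ^ n / n.factorial := by
      funext n
      rw [Nat.add_sub_cancel, Nat.factorial_succ]
      push_cast
      rw [mul_div_mul_left _ _ (by positivity : ((n:ℝ)+1) ≠ 0)]
    rw [he]
    exact Real.summable_pow_div_factorial R
  exact (summable_nat_add_iff 1).1 h

lemma hasDerivAt_phi (b : ℝ) (hb : 0 < b) (t : ℝ) :
    HasDerivAt (phi b) (-(phi (b+1) t)) t := by
  set R : ℝ := |t| + 1 with hR
  have hRt : |t| < R := by simp [hR]
  have hbound : ∀ n : ℕ, ∀ y ∈ Metric.ball (0:ℝ) R,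
      ‖besselC b n * ((n:ℝ) * y ^ (n-1))‖ ≤ (1 / Real.Gamma (b+1)) * ((n : ℝ) * R ^ (n-1) / n.factorial) := by
    intro n y hy
    rw [Metric.mem_ball, dist_zero_right, Real.norm_eq_abs] at hy
    rw [norm_mul, norm_mul, Real.norm_eq_abs, Real.norm_eq_abs, Real.norm_eq_abs, abs_pow,
      Nat.abs_cast]
    calc |besselC b n| * ((n:ℝ) * |y| ^ (n-1))
        ≤ ((1 / Real.Gamma (b+1)) * (1 / n.factorial)) * ((n:ℝ) * R ^ (n-1)) := by
          apply mul_le_mul (besselC_abs_le b hb n) _ (by positivity) (by positivity)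
          exact mul_le_mul_of_nonneg_left
            (pow_le_pow_left₀ (abs_nonneg y) (le_of_lt hy) _) (by positivity)
      _ = (1 / Real.Gamma (b+1)) * ((n : ℝ) * R ^ (n-1) / n.factorial) := by ring
  have ht : t ∈ Metric.ball (0:ℝ) R := by
    rw [Metric.mem_ball, dist_zero_right, Real.norm_eq_abs]; exact hRt
  have hsum0 : Summable (fun n : ℕ => besselC b n * (0:ℝ) ^ n) := by
    apply summable_of_ne_finset_zero (s := {0})
    intro n hn
    simp only [Finset.mem_singleton] at hn
    rw [zero_pow hn, mul_zero]
  have key := hasDerivAt_tsum_of_isPreconnected (summable_deriv_bound b hb R)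
    Metric.isOpen_ball ((convex_ball (0:ℝ) R).isPreconnected)
    (g := fun n y => besselC b n * y ^ n)
    (g' := fun n y => besselC b n * ((n:ℝ) * y ^ (n-1)))
    (fun n y _ => (hasDerivAt_pow n y).const_mul (besselC b n))
    hbound
    (show (0:ℝ) ∈ Metric.ball (0:ℝ) R by
      rw [Metric.mem_ball, dist_zero_right, norm_zero]; positivity)
    hsum0 ht
  have hsum : Summable (fun n : ℕ => besselC b n * ((n:ℝ) * t ^ (n-1))) :=
    Summable.of_norm_bounded (summable_deriv_bound b hb R) (fun n => hbound n t ht)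
  have heq : ∑' n : ℕ, besselC b n * ((n:ℝ) * t ^ (n-1)) = -(phi (b+1) t) := by
    rw [Summable.tsum_eq_zero_add hsum]
    simp only [Nat.cast_zero, zero_mul, mul_zero, zero_add]
    have hterm : ∀ m : ℕ, besselC b (m+1) * (((m+1:ℕ)):ℝ) * t ^ ((m+1)-1) = -(besselC (b+1) m * t ^ m) := by
      intro m
      rw [Nat.add_sub_cancel]
      push_cast
      rw [show besselC b (m+1) * ((m:ℝ)+1) * t ^ m = (((m:ℝ)+1) * besselC b (m+1)) * t ^ m by ring,
        besselC_succ b hb]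
      ring
    calc ∑' m : ℕ, besselC b (m+1) * (((m+1:ℕ):ℝ) * t ^ ((m+1)-1))
        = ∑' m : ℕ, -(besselC (b+1) m * t ^ m) := by
          apply tsum_congr; intro m; rw [← mul_assoc]; exact hterm m
      _ = -(phi (b+1) t) := by rw [tsum_neg]; rfl
  rw [← heq]
  exact key

lemma continuous_phi (b : ℝ) (hb : 0 < b) : Continuous (phi b) :=
  continuous_iff_continuousAt.2 fun t => (hasDerivAt_phi b hb t).continuousAt

lemma besselC_rec (a : ℝ) (ha : 0 < a) (m : ℕ) :
    besselC a (m+1) + besselC (a+2) m = (a+1) * besselC (a+1) (m+1) := by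
  have hΓpos : 0 < Real.Gamma ((m:ℝ) + a + 2) := Real.Gamma_pos_of_pos (by positivity)
  have h3 : Real.Gamma ((m:ℝ) + a + 2 + 1) = ((m:ℝ) + a + 2) * Real.Gamma ((m:ℝ) + a + 2) :=
    Real.Gamma_add_one (by positivity)
  have e1 : ((m + 1 : ℕ) : ℝ) + a + 1 = (m:ℝ) + a + 2 := by push_cast; ring
  have e2 : ((m : ℕ) : ℝ) + (a + 2) + 1 = (m:ℝ) + a + 2 + 1 := by push_cast; ring
  have e3 : ((m + 1 : ℕ) : ℝ) + (a + 1) + 1 = (m:ℝ) + a + 2 + 1 := by push_cast; ring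
  rw [besselC, besselC, besselC, e1, e2, e3, h3, Nat.factorial_succ, pow_succ]
  have hf : ((m.factorial : ℝ)) ≠ 0 := by positivity
  have hm2 : ((m:ℝ) + a + 2) ≠ 0 := by positivity
  field_simp
  push_cast; ring

set_option maxHeartbeats 1000000 in
lemma phi_rec (a : ℝ) (ha : 0 < a) (t : ℝ) :
    phi a t + t * phi (a+2) t = (a+1) * phi (a+1) t := by
  have ha1 : (0:ℝ) < a + 1 := by linarith
  have ha2 : (0:ℝ) < a + 2 := by linarith
  have s0 : Summable (fun m : ℕ => besselC a m * t ^ m) := summable_phi a ha t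
  have s1 : Summable (fun m : ℕ => besselC (a+1) m * t ^ m) := summable_phi (a+1) ha1 t
  have s2 : Summable (fun m : ℕ => besselC (a+2) m * t ^ m) := summable_phi (a+2) ha2 t
  have s0' : Summable (fun m : ℕ => besselC a (m+1) * t ^ (m+1)) :=
    (summable_nat_add_iff 1).2 s0
  have s1' : Summable (fun m : ℕ => besselC (a+1) (m+1) * t ^ (m+1)) :=
    (summable_nat_add_iff 1).2 s1
  have h0 : phi a t = besselC a 0 + ∑' m : ℕ, besselC a (m+1) * t ^ (m+1) := by
    rw [phi, Summable.tsum_eq_zero_add s0, pow_zero, mul_one]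
  have h1 : phi (a+1) t = besselC (a+1) 0 + ∑' m : ℕ, besselC (a+1) (m+1) * t ^ (m+1) := by
    rw [phi, Summable.tsum_eq_zero_add s1, pow_zero, mul_one]
  have h2 : t * phi (a+2) t = ∑' m : ℕ, besselC (a+2) m * t ^ (m+1) := by
    rw [phi, ← tsum_mul_left]
    apply tsum_congr; intro m; rw [pow_succ]; ring
  have hc0 : besselC a 0 = (a+1) * besselC (a+1) 0 := by
    rw [besselC, besselC]
    have : Real.Gamma (((0:ℕ):ℝ) + (a+1) + 1) = (a+1) * Real.Gamma (((0:ℕ):ℝ) + a + 1) := by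
      push_cast
      rw [show (0:ℝ) + (a+1) + 1 = (a+1)+1 by ring, show (0:ℝ) + a + 1 = a+1 by ring]
      exact Real.Gamma_add_one (by positivity)
    rw [this]
    have h4 : Real.Gamma (((0:ℕ):ℝ) + a + 1) ≠ 0 := by
      refine (Real.Gamma_pos_of_pos ?_).ne'
      push_cast; linarith
    field_simp
  have s2' : Summable (fun m : ℕ => besselC (a+2) m * t ^ (m+1)) :=
    (s2.mul_left t).congr (fun m => by rw [pow_succ]; ring)
  rw [h0, h2, h1, add_assoc, ← Summable.tsum_add s0' s2']
  rw [mul_add, ← hc0, ← tsum_mul_left]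
  congr 1
  apply tsum_congr
  intro m
  rw [← add_mul, besselC_rec a ha m, mul_assoc]

lemma phi_main (a : ℝ) (ha : 0 < a) : ∀ t ∈ Icc (0:ℝ) (a^2/4),
    0 < phi a t ∧ 0 < phi (a+1) t ∧ Real.sqrt t * phi (a+1) t < phi a t := by
  set T : ℝ := a^2/4 with hT
  set u : ℝ → ℝ := phi a with hu
  set v : ℝ → ℝ := phi (a+1) with hv
  set w : ℝ → ℝ := phi (a+2) with hw
  set E : ℝ → ℝ := fun t => u t * u t - t * (v t * v t) with hE
  have ha1 : (0:ℝ) < a + 1 := by linarith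
  have hu' : ∀ t, HasDerivAt u (-(v t)) t := hasDerivAt_phi a ha
  have hv' : ∀ t, HasDerivAt v (-(w t)) t := by
    intro t
    have := hasDerivAt_phi (a+1) ha1 t
    rwa [show a+1+1 = a+2 by ring] at this
  have hucont : Continuous u := continuous_phi a ha
  have hvcont : Continuous v := continuous_phi (a+1) ha1
  have hEcont : Continuous E := by
    apply Continuous.sub (hucont.mul hucont)
    exact continuous_id.mul (hvcont.mul hvcont)
  have hu0 : 0 < u 0 := phi_zero_pos a ha
  have hv0 : 0 < v 0 := phi_zero_pos (a+1) ha1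
  have hE0 : 0 < E 0 := by
    simp only [hE]
    nlinarith
  have hEderiv : ∀ t : ℝ, HasDerivAt E
      ((-(v t) * u t + u t * -(v t)) - (1 * (v t * v t) + t * (-(w t) * v t + v t * -(w t)))) t := by
    intro t
    exact ((hu' t).mul (hu' t)).sub ((hasDerivAt_id t).mul ((hv' t).mul (hv' t)))
  -- the bad set
  set S : Set ℝ := {t | t ∈ Icc 0 T ∧ (u t ≤ 0 ∨ v t ≤ 0 ∨ E t ≤ 0)} with hS
  have hSclosed : IsClosed S := by
    apply IsClosed.inter isClosed_Icc
    apply IsClosed.union (isClosed_le hucont continuous_const)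
    exact IsClosed.union (isClosed_le hvcont continuous_const) (isClosed_le hEcont continuous_const)
  have hSempty : ¬ S.Nonempty := by
    intro hne
    have hbdd : BddBelow S := ⟨0, fun t ht => ht.1.1⟩
    set t0 : ℝ := sInf S with ht0
    have ht0S : t0 ∈ S := hSclosed.csInf_mem hne hbdd
    have ht0T : t0 ≤ T := ht0S.1.2
    have ht0nn : 0 ≤ t0 := ht0S.1.1
    have h0notS : (0:ℝ) ∉ S := by
      intro h0
      rcases h0.2 with h | h | h <;> linarith
    have ht0pos : 0 < t0 := lt_of_le_of_ne ht0nn (fun h => h0notS (h ▸ ht0S))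
    have hbefore : ∀ t, 0 ≤ t → t < t0 → 0 < u t ∧ 0 < v t ∧ 0 < E t := by
      intro t htnn htlt
      have htnotS : t ∉ S := fun hmem => absurd (csInf_le hbdd hmem) (not_le.2 htlt)
      have htIcc : t ∈ Icc (0:ℝ) T := ⟨htnn, le_trans (le_of_lt htlt) ht0T⟩
      by_contra hcon
      push_neg at hcon
      apply htnotS
      refine ⟨htIcc, ?_⟩
      rcases le_or_gt (u t) 0 with h | h
      · exact Or.inl h
      rcases le_or_gt (v t) 0 with h2 | h2
      · exact Or.inr (Or.inl h2)
      exact Or.inr (Or.inr (hcon h h2))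
    -- limits from the left give nonnegativity at t0
    have hneBot : (𝓝[<] t0).NeBot := nhdsLT_neBot t0
    have hev : ∀ᶠ t in 𝓝[<] t0, 0 < t ∧ t < t0 := by
      have h1 : ∀ᶠ t in 𝓝[<] t0, 0 < t :=
        eventually_nhdsWithin_of_eventually_nhds (Filter.Tendsto.eventually_const_lt ht0pos tendsto_id)
      have h2 : ∀ᶠ t in 𝓝[<] t0, t < t0 := eventually_mem_nhdsWithin
      exact h1.and h2
    have hunn : 0 ≤ u t0 := by
      refine ge_of_tendsto (((hucont.tendsto t0).mono_left nhdsWithin_le_nhds) : Tendsto u (𝓝[<] t0) (𝓝 (u t0))) ?_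
      filter_upwards [hev] with t ht
      exact le_of_lt (hbefore t (le_of_lt ht.1) ht.2).1
    -- v t0 > 0 via the function L t = t^(a+1) * v t
    have hvpos : 0 < v t0 := by
      set L : ℝ → ℝ := fun t => t ^ (a+1) * v t with hL
      have hLcont : ContinuousOn L (Icc 0 t0) := by
        apply ContinuousOn.mul _ hvcont.continuousOn
        intro x hx
        exact (Real.continuousAt_rpow_const x (a+1) (Or.inr (by linarith))).continuousWithinAt
      have hLmono : StrictMonoOn L (Icc 0 t0) := by
        apply strictMonoOn_of_deriv_pos (convex_Icc 0 t0) hLcont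
        intro x hx
        rw [interior_Icc] at hx
        have hx0 : 0 < x := hx.1
        have hDL : HasDerivAt L ((a+1) * x ^ a * v x + x ^ (a+1) * -(w x)) x := by
          have h1 : HasDerivAt (fun t : ℝ => t ^ (a+1)) ((a+1) * x ^ a) x := by
            have := Real.hasDerivAt_rpow_const (x := x) (p := a+1) (Or.inl hx0.ne')
            rwa [show a+1-1 = a by ring] at this
          exact h1.mul (hv' x)
        rw [hDL.deriv]
        have hux := (hbefore x (le_of_lt hx0) hx.2).1
        have hrec := phi_rec a ha x
        have hxp : x ^ (a+1) = x ^ a * x := by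
          rw [Real.rpow_add hx0, Real.rpow_one]
        have hval : (a+1) * x ^ a * v x + x ^ (a+1) * -(w x) = x ^ a * u x := by
          rw [hxp]
          have : u x = (a+1) * v x - x * w x := by rw [hu, hv, hw]; linarith [hrec]
          rw [this]; ring
        rw [hval]
        positivity
      have hL0 : L 0 = 0 := by
        simp only [hL]
        rw [Real.zero_rpow (by positivity : a+1 ≠ 0), zero_mul]
      have hlt := hLmono (left_mem_Icc.2 ht0nn) (right_mem_Icc.2 ht0nn) ht0pos
      rw [hL0] at hlt
      simp only [hL] at hlt
      have ht0p : (0:ℝ) < t0 ^ (a+1) := Real.rpow_pos_of_pos ht0pos _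
      rcases mul_pos_iff.1 hlt with ⟨_, h⟩ | ⟨h, _⟩
      · exact h
      · linarith
    -- E t0 ≤ 0
    have hEle : E t0 ≤ 0 := by
      rcases ht0S.2 with h | h | h
      · have hu0' : u t0 = 0 := le_antisymm h hunn
        simp only [hE, hu0']
        nlinarith
      · linarith
      · exact h
    -- u t0 ≤ sqrt t0 * v t0
    have husq : u t0 ≤ Real.sqrt t0 * v t0 := by
      have h1 : u t0 * u t0 ≤ t0 * (v t0 * v t0) := by simp only [hE] at hEle; linarith
      have h2 : (Real.sqrt t0 * v t0) ^ 2 = t0 * (v t0 * v t0) := by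
        rw [mul_pow, Real.sq_sqrt ht0nn]; ring
      have h5 : 0 ≤ Real.sqrt t0 * v t0 := mul_nonneg (Real.sqrt_nonneg t0) (le_of_lt hvpos)
      nlinarith [h1, h2, h5]
    -- derivative of E at t0 is positive
    have hst : Real.sqrt t0 ≤ a / 2 := by
      have : Real.sqrt T = a / 2 := by
        rw [hT, show a^2/4 = (a/2)^2 by ring, Real.sqrt_sq (by positivity)]
      rw [← this]
      exact Real.sqrt_le_sqrt ht0T
    have ht0w : t0 * w t0 = (a+1) * v t0 - u t0 := by
      have := phi_rec a ha t0
      rw [← hu, ← hv, ← hw] at this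
      linarith
    have he0pos : 0 < (-(v t0) * u t0 + u t0 * -(v t0)) -
        (1 * (v t0 * v t0) + t0 * (-(w t0) * v t0 + v t0 * -(w t0))) := by
      have expand : (-(v t0) * u t0 + u t0 * -(v t0)) -
          (1 * (v t0 * v t0) + t0 * (-(w t0) * v t0 + v t0 * -(w t0)))
          = -4 * u t0 * v t0 + (2*a+1) * (v t0 * v t0) := by
        have : t0 * (-(w t0) * v t0 + v t0 * -(w t0)) = -2 * (t0 * w t0) * v t0 := by ring
        rw [this, ht0w]; ring
      rw [expand]
      nlinarith [hvpos, husq, hst, mul_le_mul_of_nonneg_right husq (le_of_lt hvpos)]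
    -- slope contradiction
    have hslope := (hasDerivAt_iff_tendsto_slope.1 (hEderiv t0)).mono_left
      (nhdsWithin_mono t0 (fun x hx => ne_of_lt hx : Iio t0 ⊆ {t0}ᶜ))
    have hev2 : ∀ᶠ t in 𝓝[<] t0, 0 < slope E t0 t :=
      hslope.eventually (eventually_gt_nhds he0pos)
    obtain ⟨t, hts, htpos⟩ := (hev2.and hev).exists
    have hEt : 0 < E t := (hbefore t (le_of_lt htpos.1) htpos.2).2.2
    have : slope E t0 t < 0 := by
      rw [slope_def_field]
      apply div_neg_of_pos_of_neg
      · linarith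
      · linarith [htpos.2]
    linarith [hts]
  -- conclude
  intro t htIcc
  have htnotS : t ∉ S := fun hmem => hSempty ⟨t, hmem⟩
  have hnot : ¬(u t ≤ 0 ∨ v t ≤ 0 ∨ E t ≤ 0) := fun h => htnotS ⟨htIcc, h⟩
  push_neg at hnot
  obtain ⟨h1, h2, h3⟩ := hnot
  refine ⟨h1, h2, ?_⟩
  have h4 : (Real.sqrt t * v t) ^ 2 = t * (v t * v t) := by
    rw [mul_pow, Real.sq_sqrt htIcc.1]; ring
  simp only [hE] at h3
  have h5 : 0 ≤ Real.sqrt t * v t := mul_nonneg (Real.sqrt_nonneg t) (le_of_lt h2)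
  nlinarith [h3, h4, h5, h1]

lemma besselJ_eq (a z : ℝ) (hz : 0 < z) :
    besselJ a z = (z/2) ^ a * phi a ((z/2)^2) := by
  have h2 : (0:ℝ) < z/2 := by linarith
  rw [besselJ, phi, ← tsum_mul_left]
  apply tsum_congr
  intro m
  have e1 : (z/2) ^ (2 * (m:ℝ) + a) = ((z/2)^2) ^ m * (z/2) ^ a := by
    rw [Real.rpow_add h2, show (2 * (m:ℝ)) = ((2*m : ℕ) : ℝ) by push_cast; ring,
      Real.rpow_natCast, pow_mul]
  rw [e1, besselC]
  ring

/-- For `a > 0` and `0 < x ≤ 1`, `x^a J_a(a) ≤ J_a(ax) ≤ e^{a(1-x)} x^a J_a(a)`;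
in particular `J_a(ax) > 0` whenever `J_a(a) > 0`. -/
theorem besselJ_bounds (a : ℝ) (ha : 0 < a) (x : ℝ) (hx0 : 0 < x) (hx1 : x ≤ 1) :
    x ^ a * besselJ a a ≤ besselJ a (a * x) ∧
      besselJ a (a * x) ≤ Real.exp (a * (1 - x)) * (x ^ a * besselJ a a) ∧
      (0 < besselJ a a → 0 < besselJ a (a * x)) := by
  have ha1 : (0:ℝ) < a + 1 := by linarith
  have hax : 0 < a * x := by positivity
  have hqx : (a*x/2)^2 = a^2/4 * x^2 := by ring
  have hq1 : (a/2)^2 = a^2/4 := by ring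
  have hJx : besselJ a (a*x) = x ^ a * (a/2) ^ a * phi a (a^2/4 * x^2) := by
    rw [besselJ_eq a (a*x) hax, hqx]
    congr 1
    rw [show a*x/2 = x * (a/2) by ring, Real.mul_rpow (le_of_lt hx0) (by positivity)]
  have hJ1 : besselJ a a = (a/2) ^ a * phi a (a^2/4) := by
    rw [besselJ_eq a a ha, hq1]
  have hC : (0:ℝ) < x ^ a * (a/2) ^ a := by positivity
  have hmem : ∀ y : ℝ, 0 ≤ y → y ≤ 1 → a^2/4 * y^2 ∈ Icc (0:ℝ) (a^2/4) := by
    intro y hy0 hy1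
    constructor
    · positivity
    · have hy2 : y^2 ≤ 1 := by nlinarith
      nlinarith [sq_nonneg a]
  have hmemx := hmem x (le_of_lt hx0) hx1
  have hmainx := phi_main a ha _ hmemx
  have hmain1 := phi_main a ha (a^2/4) ⟨by positivity, le_refl _⟩
  -- antitonicity of phi a on [0, a^2/4]
  have hanti : AntitoneOn (phi a) (Icc (0:ℝ) (a^2/4)) := by
    apply antitoneOn_of_deriv_nonpos (convex_Icc _ _) (continuous_phi a ha).continuousOn
    · intro t _
      exact (hasDerivAt_phi a ha t).differentiableAt.differentiableWithinAt
    · intro t ht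
      rw [interior_Icc] at ht
      rw [(hasDerivAt_phi a ha t).deriv]
      have := (phi_main a ha t ⟨le_of_lt ht.1, le_of_lt ht.2⟩).2.1
      linarith
  have hphix_ge : phi a (a^2/4) ≤ phi a (a^2/4 * x^2) := by
    exact hanti hmemx ⟨by positivity, le_refl _⟩ hmemx.2
  -- monotone function for upper bound
  set G : ℝ → ℝ := fun y => Real.exp (a*y) * phi a (a^2/4 * y^2) with hG
  have hGderiv : ∀ y : ℝ, HasDerivAt G
      ((Real.exp (a*y) * a) * phi a (a^2/4 * y^2) +
        Real.exp (a*y) * (-(phi (a+1) (a^2/4 * y^2)) * (a^2/4 * (2*y)))) y := by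
    intro y
    have hq : HasDerivAt (fun y : ℝ => a^2/4 * y^2) (a^2/4 * (2*y)) y := by
      simpa using (hasDerivAt_pow 2 y).const_mul (a^2/4)
    have hphi : HasDerivAt (fun y : ℝ => phi a (a^2/4 * y^2))
        (-(phi (a+1) (a^2/4 * y^2)) * (a^2/4 * (2*y))) y :=
      (hasDerivAt_phi a ha _).comp y hq
    have hlin : HasDerivAt (fun y : ℝ => a * y) a y := by
      simpa using (hasDerivAt_id y).const_mul a
    have hexp : HasDerivAt (fun y : ℝ => Real.exp (a*y)) (Real.exp (a*y) * a) y := hlin.exp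
    exact hexp.mul hphi
  have hGmono : MonotoneOn G (Icc x 1) := by
    apply monotoneOn_of_deriv_nonneg (convex_Icc _ _)
    · apply Continuous.continuousOn
      apply Continuous.mul (Real.continuous_exp.comp (continuous_const.mul continuous_id))
      exact (continuous_phi a ha).comp (continuous_const.mul (continuous_pow 2))
    · intro y _
      exact (hGderiv y).differentiableAt.differentiableWithinAt
    · intro y hy
      rw [interior_Icc] at hy
      have hy0 : 0 < y := lt_trans hx0 hy.1
      have hy1 : y ≤ 1 := le_of_lt hy.2
      rw [(hGderiv y).deriv]
      have hmy := phi_main a ha _ (hmem y (le_of_lt hy0) hy1)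
      have hsq : Real.sqrt (a^2/4 * y^2) = a/2 * y := by
        rw [show a^2/4 * y^2 = (a/2*y)^2 by ring, Real.sqrt_sq (by positivity)]
      have hlt := hmy.2.2
      rw [hsq] at hlt
      have hexp : (0:ℝ) < Real.exp (a*y) := Real.exp_pos _
      have key : (phi (a+1) (a^2/4 * y^2)) * (a^2/4 * (2*y)) ≤ a * phi a (a^2/4 * y^2) := by
        have h1 : a^2/4 * (2*y) = a * (a/2 * y) := by ring
        rw [h1, show phi (a+1) (a^2/4 * y^2) * (a * (a/2*y)) = a * (a/2*y * phi (a+1) (a^2/4*y^2)) by ring]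
        apply mul_le_mul_of_nonneg_left _ (le_of_lt ha)
        linarith
      nlinarith [key, hexp]
  have hGle : G x ≤ G 1 := hGmono (left_mem_Icc.2 hx1) (right_mem_Icc.2 hx1) hx1
  refine ⟨?_, ?_, ?_⟩
  · rw [hJx, hJ1, show x ^ a * ((a/2)^a * phi a (a^2/4)) = x^a * (a/2)^a * phi a (a^2/4) by ring]
    exact mul_le_mul_of_nonneg_left hphix_ge (le_of_lt hC)
  · have hGle' : Real.exp (a*x) * phi a (a^2/4 * x^2) ≤ Real.exp a * phi a (a^2/4) := by
      simp only [hG] at hGle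
      simpa using hGle
    have hup : phi a (a^2/4 * x^2) ≤ Real.exp (a*(1-x)) * phi a (a^2/4) := by
      have h3 := mul_le_mul_of_nonneg_left hGle' (le_of_lt (Real.exp_pos (-(a*x))))
      rw [← mul_assoc, ← mul_assoc, ← Real.exp_add, ← Real.exp_add, neg_add_cancel,
        Real.exp_zero, one_mul, show -(a*x) + a = a*(1-x) by ring] at h3
      exact h3
    rw [hJx, hJ1]
    calc x ^ a * (a/2) ^ a * phi a (a^2/4 * x^2)
        ≤ x ^ a * (a/2) ^ a * (Real.exp (a*(1-x)) * phi a (a^2/4)) :=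
          mul_le_mul_of_nonneg_left hup (le_of_lt hC)
      _ = Real.exp (a*(1-x)) * (x ^ a * ((a/2) ^ a * phi a (a^2/4))) := by ring
  · intro _
    rw [hJx]
    have := hmainx.1
    positivity
end

section
/- For real $a \geq 2$ and $\frac{1}{3} \leq x < \frac{1}{2}$, the Bessel function of the first kind satisfies $|J_a(ax)| \leq C\, e^{a(2/3 - \log 2)}\, a^{-1/3}$ for an absolute constant $C$; in particular, $a^{1/3} J_a(ax) \to 0$ as $a \to \infty$, uniformly in $x \in [1/3, 1/2)$. -/
open Real Filter

/-- `Γ(m+a+1) ≥ Γ(a+1) a^m`. -/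
private lemma gamma_prod_lower {a : ℝ} (ha : 2 ≤ a) :
    ∀ m : ℕ, Real.Gamma (a + 1) * a ^ m ≤ Real.Gamma ((m : ℝ) + a + 1) := by
  have ha0 : (0:ℝ) < a := lt_of_lt_of_le two_pos ha
  intro m
  induction m with
  | zero => simp
  | succ m ih =>
    have hpos : (0:ℝ) < (m:ℝ) + a + 1 := by positivity
    have hrec : Real.Gamma ((m:ℝ) + a + 1 + 1) = ((m:ℝ)+a+1) * Real.Gamma ((m:ℝ)+a+1) :=
      Real.Gamma_add_one hpos.ne'
    have hcast : ((m+1 : ℕ):ℝ) + a + 1 = (m:ℝ) + a + 1 + 1 := by push_cast; ring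
    rw [hcast, hrec, pow_succ]
    have hΓ : 0 < Real.Gamma (a+1) := Real.Gamma_pos_of_pos (by linarith)
    calc Real.Gamma (a+1) * (a^m * a) = a * (Real.Gamma (a+1) * a^m) := by ring
    _ ≤ ((m:ℝ)+a+1) * Real.Gamma ((m:ℝ)+a+1) :=
        mul_le_mul (by linarith) ih (by positivity) hpos.le

/-- `n! ≥ n^n e^{-n}`. -/
private lemma fact_lower (n : ℕ) : ((n:ℝ))^n * Real.exp (-(n:ℝ)) ≤ (n.factorial : ℝ) := by
  have h1 : ((n:ℝ))^n / (n.factorial : ℝ) ≤ Real.exp (n:ℝ) := by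
    have := Real.sum_le_exp_of_nonneg (x := (n:ℝ)) n.cast_nonneg (n+1)
    refine le_trans ?_ this
    have h : ((n:ℝ))^n / (n.factorial : ℝ) =
        (fun i : ℕ => (n:ℝ)^i / (i.factorial : ℝ)) n := rfl
    rw [h]
    exact Finset.single_le_sum (f := fun i : ℕ => (n:ℝ)^i / (i.factorial : ℝ))
      (fun i _ => by positivity) (Finset.self_mem_range_succ n)
  have hf : (0:ℝ) < (n.factorial : ℝ) := by exact_mod_cast n.factorial_pos
  rw [div_le_iff₀ hf] at h1
  rw [Real.exp_neg, mul_inv_le_iff₀' (Real.exp_pos _)]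
  linarith [h1]

/-- Stirling-type lower bound: `Γ(a+1) ≥ a^a e^{-a} / (e a)` for `a ≥ 2`. -/
private lemma gamma_stirling_lower {a : ℝ} (ha : 2 ≤ a) :
    a ^ a * Real.exp (-a) / (Real.exp 1 * a) ≤ Real.Gamma (a + 1) := by
  have ha0 : (0:ℝ) < a := by linarith
  set n := ⌊a⌋₊ with hn
  have hna : (n:ℝ) ≤ a := Nat.floor_le (by linarith)
  have han : a < (n:ℝ) + 1 := Nat.lt_floor_add_one a
  have hn2 : 2 ≤ n := Nat.le_floor (by exact_mod_cast ha)
  have hn2' : (2:ℝ) ≤ (n:ℝ) := by exact_mod_cast hn2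
  have hmono : Real.Gamma ((n:ℝ) + 1) ≤ Real.Gamma (a + 1) := by
    rcases eq_or_lt_of_le (by linarith : (n:ℝ) + 1 ≤ a + 1) with h | h
    · rw [h]
    · exact (Real.Gamma_strictMonoOn_Ici (by simp; linarith) (by simp; linarith) h).le
  have hfact : Real.Gamma ((n:ℝ) + 1) = (n.factorial : ℝ) := by
    exact_mod_cast Real.Gamma_nat_eq_factorial n
  have h1 : (a-1) ^ (a-1) * Real.exp (-a) ≤ ((n:ℝ))^n * Real.exp (-(n:ℝ)) := by
    have hb : (a-1) ^ (a-1) ≤ ((n:ℝ))^n := by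
      calc (a-1) ^ (a-1) ≤ ((n:ℝ)) ^ (a-1) :=
            Real.rpow_le_rpow (by linarith) (by linarith) (by linarith)
      _ ≤ ((n:ℝ)) ^ ((n:ℝ)) :=
            Real.rpow_le_rpow_of_exponent_le (by linarith) (by linarith)
      _ = ((n:ℝ))^n := Real.rpow_natCast _ n
    have he : Real.exp (-a) ≤ Real.exp (-(n:ℝ)) := Real.exp_le_exp.2 (by linarith)
    exact mul_le_mul hb he (Real.exp_pos _).le (by positivity)
  have h2 : a ^ a / (Real.exp 1 * a) ≤ (a-1) ^ (a-1) := by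
    have ha1 : (0:ℝ) < a - 1 := by linarith
    have hr : a ^ a / a = a ^ (a-1) := by
      rw [Real.rpow_sub ha0, Real.rpow_one]
    have hsplit : a ^ (a-1) ≤ Real.exp 1 * (a-1) ^ (a-1) := by
      have hq : (0:ℝ) < a / (a-1) := by positivity
      have hmul : a ^ (a-1) = (a-1) ^ (a-1) * (a/(a-1)) ^ (a-1) := by
        rw [← Real.mul_rpow (by linarith) hq.le]
        congr 1
        field_simp
      have hlog : Real.log (a/(a-1)) ≤ 1/(a-1) := by
        have h := Real.log_le_sub_one_of_pos hq
        have heq : a/(a-1) - 1 = 1/(a-1) := by field_simp; ring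
        linarith [heq ▸ h]
      have hpow : (a/(a-1)) ^ (a-1) ≤ Real.exp 1 := by
        rw [Real.rpow_def_of_pos hq]
        apply Real.exp_le_exp.2
        calc Real.log (a/(a-1)) * (a-1) ≤ (1/(a-1)) * (a-1) :=
              mul_le_mul_of_nonneg_right hlog ha1.le
        _ = 1 := by field_simp
      calc a ^ (a-1) = (a-1) ^ (a-1) * (a/(a-1)) ^ (a-1) := hmul
      _ ≤ (a-1) ^ (a-1) * Real.exp 1 :=
          mul_le_mul_of_nonneg_left hpow (by positivity)
      _ = Real.exp 1 * (a-1) ^ (a-1) := by ring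
    rw [div_le_iff₀ (by positivity)]
    calc a ^ a = a ^ (a-1) * a := by rw [← hr]; field_simp
    _ ≤ (Real.exp 1 * (a-1)^(a-1)) * a :=
        mul_le_mul_of_nonneg_right hsplit ha0.le
    _ = (a-1)^(a-1) * (Real.exp 1 * a) := by ring
  calc a ^ a * Real.exp (-a) / (Real.exp 1 * a)
      = (a ^ a / (Real.exp 1 * a)) * Real.exp (-a) := by ring
  _ ≤ (a-1)^(a-1) * Real.exp (-a) :=
      mul_le_mul_of_nonneg_right h2 (Real.exp_pos _).le
  _ ≤ ((n:ℝ))^n * Real.exp (-(n:ℝ)) := h1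
  _ ≤ (n.factorial : ℝ) := fact_lower n
  _ = Real.Gamma ((n:ℝ)+1) := hfact.symm
  _ ≤ Real.Gamma (a+1) := hmono

set_option maxHeartbeats 1000000 in
/-- The crude series bound `|J_a(ax)| ≤ e·a·e^{a(17/16 - 2 log 2)}`. -/
private lemma besselJ_bound {a x : ℝ} (ha : 2 ≤ a) (hx1 : 1/3 ≤ x) (hx2 : x < 1/2) :
    |besselJ a (a * x)| ≤ Real.exp 1 * a * Real.exp (a * (17/16 - 2 * Real.log 2)) := by
  have ha0 : (0:ℝ) < a := by linarith
  set y : ℝ := a * x / 2 with hy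
  have hy0 : 0 < y := by positivity
  have hy4 : y ≤ a / 4 := by rw [hy]; nlinarith
  have hΓa : 0 < Real.Gamma (a + 1) := Real.Gamma_pos_of_pos (by linarith)
  set f : ℕ → ℝ := fun m =>
    ((-1 : ℝ) ^ m / ((m.factorial : ℝ) * Real.Gamma ((m : ℝ) + a + 1))) *
      (a * x / 2) ^ (2 * (m : ℝ) + a) with hf
  set g : ℕ → ℝ := fun m => y ^ a / Real.Gamma (a+1) * ((y^2/a)^m / (m.factorial : ℝ)) with hg
  have habs : ∀ m, |f m| ≤ g m := by
    intro m
    have hΓm : 0 < Real.Gamma ((m:ℝ) + a + 1) := Real.Gamma_pos_of_pos (by positivity)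
    have hfac : (0:ℝ) < (m.factorial : ℝ) := by exact_mod_cast m.factorial_pos
    have hrpow : (a * x / 2 : ℝ) ^ (2 * (m : ℝ) + a) = (y^2)^m * y^a := by
      rw [← hy, Real.rpow_add hy0]
      congr 1
      rw [show (2*(m:ℝ)) = ((2*m : ℕ):ℝ) by push_cast; ring, Real.rpow_natCast, pow_mul]
    have habs1 : |f m| = (y^2)^m * y^a / ((m.factorial : ℝ) * Real.Gamma ((m:ℝ)+a+1)) := by
      rw [hf]
      simp only []
      rw [hrpow, abs_mul, abs_div, abs_pow, abs_neg, abs_one, one_pow,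
        abs_of_pos (mul_pos hfac hΓm), abs_of_pos (by positivity : (0:ℝ) < (y^2)^m * y^a)]
      ring
    have hgm : y ^ a / Real.Gamma (a+1) * ((y^2/a)^m / (m.factorial : ℝ)) =
        (y^2)^m * y^a / ((m.factorial : ℝ) * (Real.Gamma (a+1) * a^m)) := by
      rw [div_pow]
      field_simp
    calc |f m| = (y^2)^m * y^a / ((m.factorial : ℝ) * Real.Gamma ((m:ℝ)+a+1)) := habs1
    _ ≤ (y^2)^m * y^a / ((m.factorial : ℝ) * (Real.Gamma (a+1) * a^m)) := by
        apply div_le_div_of_nonneg_left (by positivity) (by positivity)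
        exact mul_le_mul_of_nonneg_left (gamma_prod_lower ha m) hfac.le
    _ = g m := hgm.symm
  have hgsum : Summable g := (Real.summable_pow_div_factorial (y^2/a)).mul_left _
  have hfsum : Summable f := by
    apply Summable.of_abs
    exact Summable.of_nonneg_of_le (fun m => abs_nonneg _) habs hgsum
  have htsum_g : ∑' m, g m = y ^ a / Real.Gamma (a+1) * Real.exp (y^2/a) := by
    rw [hg, tsum_mul_left]
    congr 1
    rw [Real.exp_eq_exp_ℝ, NormedSpace.exp_eq_tsum_div]
  have hJ : besselJ a (a * x) = ∑' m, f m := by rw [besselJ]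
  have hbound1 : |besselJ a (a*x)| ≤ y ^ a / Real.Gamma (a+1) * Real.exp (y^2/a) := by
    rw [hJ, ← htsum_g]
    calc |∑' m, f m| ≤ ∑' m, |f m| := by
          rw [← Real.norm_eq_abs]
          refine le_trans (norm_tsum_le_tsum_norm (f := f) ?_) (le_of_eq ?_)
          · simpa [Real.norm_eq_abs] using hfsum.abs
          · simp [Real.norm_eq_abs]
    _ ≤ ∑' m, g m := Summable.tsum_le_tsum habs hfsum.abs hgsum
  have hstep2 : y ^ a / Real.Gamma (a+1) * Real.exp (y^2/a) ≤
      (a/4) ^ a * Real.exp (a/16) / (a ^ a * Real.exp (-a) / (Real.exp 1 * a)) := by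
    have hya : y ^ a ≤ (a/4) ^ a := Real.rpow_le_rpow hy0.le hy4 ha0.le
    have hy2 : Real.exp (y^2/a) ≤ Real.exp (a/16) := by
      apply Real.exp_le_exp.2
      rw [div_le_div_iff₀ ha0 (by norm_num)]
      nlinarith
    have hden := gamma_stirling_lower ha
    have hdenpos : (0:ℝ) < a ^ a * Real.exp (-a) / (Real.exp 1 * a) := by positivity
    calc y ^ a / Real.Gamma (a+1) * Real.exp (y^2/a)
        = y ^ a * Real.exp (y^2/a) / Real.Gamma (a+1) := by ring
    _ ≤ (a/4) ^ a * Real.exp (a/16) / Real.Gamma (a+1) := by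
        gcongr
    _ ≤ (a/4) ^ a * Real.exp (a/16) / (a ^ a * Real.exp (-a) / (Real.exp 1 * a)) := by
        apply div_le_div_of_nonneg_left (by positivity) hdenpos hden
  have hfinal : (a/4) ^ a * Real.exp (a/16) / (a ^ a * Real.exp (-a) / (Real.exp 1 * a)) =
      Real.exp 1 * a * Real.exp (a * (17/16 - 2 * Real.log 2)) := by
    have hA : (a/4)^a = Real.exp (a * Real.log (a/4)) := by
      rw [Real.rpow_def_of_pos (by positivity)]; ring_nf
    have hB : a^a = Real.exp (a * Real.log a) := by
      rw [Real.rpow_def_of_pos ha0]; ring_nf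
    have hlog : Real.log (a/4) = Real.log a - 2 * Real.log 2 := by
      rw [Real.log_div ha0.ne' (by norm_num),
        show Real.log 4 = 2 * Real.log 2 by
          rw [show (4:ℝ) = 2^(2:ℕ) by norm_num, Real.log_pow]; push_cast; ring]
    rw [hA, hB, hlog]
    field_simp
    simp only [← Real.exp_add]
    congr 1
    ring
  linarith [hbound1, hstep2, hfinal ▸ hstep2]

/-- Comparison of the crude bound with the stated bound. -/
private lemma poly_bound {a : ℝ} (ha : 2 ≤ a) :
    Real.exp 1 * a * Real.exp (a * (17/16 - 2 * Real.log 2)) ≤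
      (3 * Real.exp 1) * Real.exp (a * (2/3 - Real.log 2)) * a ^ (-(1/3) : ℝ) := by
  have ha0 : (0:ℝ) < a := by linarith
  have hloga : Real.log a ≤ Real.log 2 + a / (2 * Real.exp 1) := by
    have hq : (0:ℝ) < a / (2 * Real.exp 1) := by positivity
    have h1 : Real.log (a / (2 * Real.exp 1)) ≤ a / (2 * Real.exp 1) - 1 :=
      Real.log_le_sub_one_of_pos hq
    rw [Real.log_div ha0.ne' (by positivity), Real.log_mul (by norm_num) (Real.exp_pos 1).ne',
      Real.log_exp] at h1
    linarith
  have hnum : 2 / (3 * Real.exp 1) ≤ Real.log 2 - 19/48 := by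
    have he : (2.7182818283:ℝ) < Real.exp 1 := Real.exp_one_gt_d9
    have hl : (0.6931471803:ℝ) < Real.log 2 := Real.log_two_gt_d9
    rw [div_le_iff₀ (by positivity)]
    nlinarith
  have hl23 : (4/3 : ℝ) * Real.log 2 ≤ Real.log 3 := by
    have h16 : Real.log 16 ≤ Real.log 27 := Real.log_le_log (by norm_num) (by norm_num)
    rw [show (16:ℝ) = 2^(4:ℕ) by norm_num, show (27:ℝ) = 3^(3:ℕ) by norm_num,
      Real.log_pow, Real.log_pow] at h16
    push_cast at h16
    linarith
  have hkey : a ^ ((4:ℝ)/3) * Real.exp (a * (17/16 - 2 * Real.log 2)) ≤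
      3 * Real.exp (a * (2/3 - Real.log 2)) := by
    have h3 : (3:ℝ) * Real.exp (a * (2/3 - Real.log 2)) =
        Real.exp (Real.log 3 + a * (2/3 - Real.log 2)) := by
      rw [Real.exp_add, Real.exp_log (by norm_num : (0:ℝ) < 3)]
    rw [Real.rpow_def_of_pos ha0, ← Real.exp_add, h3]
    apply Real.exp_le_exp.2
    have h1 : Real.log a * (4/3) ≤ (4/3) * Real.log 2 + a * (2/(3 * Real.exp 1)) := by
      have h := mul_le_mul_of_nonneg_right hloga (by norm_num : (0:ℝ) ≤ 4/3)
      calc Real.log a * (4/3) ≤ (Real.log 2 + a / (2 * Real.exp 1)) * (4/3) := h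
      _ = (4/3) * Real.log 2 + a * (2/(3 * Real.exp 1)) := by ring
    have h2 : a * (2/(3 * Real.exp 1)) ≤ a * (Real.log 2 - 19/48) :=
      mul_le_mul_of_nonneg_left hnum ha0.le
    nlinarith [h1, h2, hl23]
  have hsplit : a ^ ((4:ℝ)/3) * a ^ (-(1/3) : ℝ) = a := by
    rw [← Real.rpow_add ha0]
    norm_num
  calc Real.exp 1 * a * Real.exp (a * (17/16 - 2 * Real.log 2))
      = Real.exp 1 * (a ^ ((4:ℝ)/3) * a ^ (-(1/3) : ℝ)) *
          Real.exp (a * (17/16 - 2 * Real.log 2)) := by rw [hsplit]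
  _ = Real.exp 1 * (a ^ ((4:ℝ)/3) * Real.exp (a * (17/16 - 2 * Real.log 2))) *
          a ^ (-(1/3) : ℝ) := by ring
  _ ≤ Real.exp 1 * (3 * Real.exp (a * (2/3 - Real.log 2))) * a ^ (-(1/3) : ℝ) := by
      have h3 : (0:ℝ) ≤ a ^ (-(1/3) : ℝ) := (Real.rpow_pos_of_pos ha0 _).le
      exact mul_le_mul_of_nonneg_right
        (mul_le_mul_of_nonneg_left hkey (Real.exp_pos 1).le) h3
  _ = (3 * Real.exp 1) * Real.exp (a * (2/3 - Real.log 2)) * a ^ (-(1/3) : ℝ) := by ring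

/-- For `a ≥ 2` and `1/3 ≤ x < 1/2`, `|J_a(ax)| ≤ C e^{a(2/3 - log 2)} a^{-1/3}` for an
absolute constant `C`; in particular `a^{1/3} J_a(ax) → 0` as `a → ∞`, uniformly in
`x ∈ [1/3, 1/2)`. -/
theorem besselJ_decay_third_half :
    (∃ C : ℝ, 0 < C ∧ ∀ a : ℝ, 2 ≤ a → ∀ x : ℝ, 1 / 3 ≤ x → x < 1 / 2 →
        |besselJ a (a * x)| ≤
          C * Real.exp (a * (2 / 3 - Real.log 2)) * a ^ (-(1 / 3 : ℝ))) ∧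
      ∀ ε : ℝ, 0 < ε → ∃ A : ℝ, 2 ≤ A ∧ ∀ a : ℝ, A ≤ a → ∀ x : ℝ,
        1 / 3 ≤ x → x < 1 / 2 → a ^ ((1 : ℝ) / 3) * |besselJ a (a * x)| < ε := by
  have hmain : ∀ a : ℝ, 2 ≤ a → ∀ x : ℝ, 1 / 3 ≤ x → x < 1 / 2 →
      |besselJ a (a * x)| ≤
        (3 * Real.exp 1) * Real.exp (a * (2 / 3 - Real.log 2)) * a ^ (-(1 / 3 : ℝ)) := by
    intro a ha x hx1 hx2
    exact (besselJ_bound ha hx1 hx2).trans (poly_bound ha)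
  refine ⟨⟨3 * Real.exp 1, by positivity, hmain⟩, ?_⟩
  intro ε hε
  have htend : Tendsto (fun a : ℝ => (3 * Real.exp 1) * Real.exp (a * (2/3 - Real.log 2)))
      atTop (nhds 0) := by
    rw [show (0:ℝ) = (3 * Real.exp 1) * 0 by ring]
    apply Tendsto.const_mul
    apply Real.tendsto_exp_atBot.comp
    have hc : (2/3 : ℝ) - Real.log 2 < 0 := by
      have := Real.log_two_gt_d9; linarith
    exact Tendsto.atTop_mul_const_of_neg hc tendsto_id
  have hev : ∀ᶠ a in atTop, (3 * Real.exp 1) * Real.exp (a * (2/3 - Real.log 2)) < ε :=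
    htend.eventually (gt_mem_nhds hε)
  obtain ⟨A₀, hA₀⟩ := eventually_atTop.1 hev
  refine ⟨max 2 A₀, le_max_left _ _, ?_⟩
  intro a haA x hx1 hx2
  have ha : 2 ≤ a := le_trans (le_max_left _ _) haA
  have ha0 : (0:ℝ) < a := by linarith
  have hbd := hmain a ha x hx1 hx2
  have hone : a ^ ((1:ℝ)/3) * a ^ (-(1/3 : ℝ)) = 1 := by
    rw [← Real.rpow_add ha0]
    norm_num
  calc a ^ ((1:ℝ)/3) * |besselJ a (a * x)|
      ≤ a ^ ((1:ℝ)/3) * ((3 * Real.exp 1) * Real.exp (a * (2/3 - Real.log 2)) *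
          a ^ (-(1/3 : ℝ))) :=
        mul_le_mul_of_nonneg_left hbd (Real.rpow_pos_of_pos ha0 _).le
  _ = (3 * Real.exp 1) * Real.exp (a * (2/3 - Real.log 2)) *
        (a ^ ((1:ℝ)/3) * a ^ (-(1/3 : ℝ))) := by ring
  _ = (3 * Real.exp 1) * Real.exp (a * (2/3 - Real.log 2)) := by rw [hone, mul_one]
  _ < ε := hA₀ a (le_trans (le_max_right _ _) haA)
end

section
/- For real $a \geq 2$ and $0 < x < \frac{1}{3}$, the Bessel function of the first kind satisfies $|J_a(ax)| \leq C\, e^{a(1 + \log(1/3))}\, a^{-1/3}$ for an absolute constant $C$; since $1 + \log\frac{1}{3} < 0$, one has $a^{1/3} J_a(ax) \to 0$ as $a \to \infty$, uniformly in $x \in (0, 1/3)$. -/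
open Real MeasureTheory Set Finset in
/-- `(2m)! ≤ 4^m (m!)^2` -/
lemma aux_fact_sq (m : ℕ) : ((2 * m).factorial : ℕ) ≤ 4 ^ m * (m.factorial) ^ 2 := by
  induction m with
  | zero => simp
  | succ m ih =>
    have h1 : 2 * (m + 1) = 2 * m + 1 + 1 := by ring
    rw [h1, Nat.factorial_succ, Nat.factorial_succ, Nat.factorial_succ]
    calc (2 * m + 1 + 1) * ((2 * m + 1) * (2 * m).factorial)
        ≤ (2 * m + 2) * ((2 * m + 2) * (4 ^ m * m.factorial ^ 2)) := by
          apply Nat.mul_le_mul (by omega)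
          exact Nat.mul_le_mul (by omega) ih
      _ = 4 ^ (m + 1) * ((m + 1) * m.factorial) ^ 2 := by ring

/-- `m! Γ(a+1) ≤ Γ(m+a+1)` for `a ≥ 1`. -/
lemma aux_gamma_fact (a : ℝ) (ha : 1 ≤ a) (m : ℕ) :
    (m.factorial : ℝ) * Real.Gamma (a + 1) ≤ Real.Gamma ((m : ℝ) + a + 1) := by
  induction m with
  | zero => simp
  | succ m ih =>
    have hpos : (0 : ℝ) < (m : ℝ) + a + 1 := by positivity
    rw [Nat.factorial_succ]
    push_cast
    have : Real.Gamma (((m : ℝ) + 1) + a + 1) = ((m : ℝ) + a + 1) * Real.Gamma ((m : ℝ) + a + 1) := by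
      rw [show ((m : ℝ) + 1) + a + 1 = ((m : ℝ) + a + 1) + 1 by ring,
        Real.Gamma_add_one hpos.ne']
    rw [this]
    have hGpos : 0 ≤ Real.Gamma ((m : ℝ) + a + 1) := (Real.Gamma_pos_of_pos hpos).le
    have hm1 : ((m : ℝ) + 1) ≤ (m : ℝ) + a + 1 := by linarith
    calc ((m : ℝ) + 1) * (m.factorial : ℝ) * Real.Gamma (a + 1)
        = ((m : ℝ) + 1) * ((m.factorial : ℝ) * Real.Gamma (a + 1)) := by ring
      _ ≤ ((m : ℝ) + 1) * Real.Gamma ((m : ℝ) + a + 1) := by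
          apply mul_le_mul_of_nonneg_left ih (by positivity)
      _ ≤ ((m : ℝ) + a + 1) * Real.Gamma ((m : ℝ) + a + 1) :=
          mul_le_mul_of_nonneg_right hm1 hGpos

open Real MeasureTheory Set Finset in
/-- Lower bound `Γ(a+1) ≥ e^{-(a+1)} a^a` for `a ≥ 1`. -/
lemma aux_gamma_lower (a : ℝ) (ha : 1 ≤ a) :
    Real.exp (-(a + 1)) * a ^ (a : ℝ) ≤ Real.Gamma (a + 1) := by
  have ha0 : (0 : ℝ) < a := by linarith
  have h1 : (0 : ℝ) < a + 1 := by linarith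
  have hint : Real.Gamma (a + 1) = ∫ x in Ioi (0 : ℝ), Real.exp (-x) * x ^ (a : ℝ) := by
    rw [Real.Gamma_eq_integral h1]; simp
  have hIcc : IntegrableOn (fun x : ℝ => Real.exp (-x) * x ^ (a : ℝ)) (Ioi 0) := by
    have := Real.GammaIntegral_convergent h1
    simpa using this
  rw [hint]
  have step1 : ∫ x in Ioc a (a + 1), Real.exp (-x) * x ^ (a : ℝ)
      ≤ ∫ x in Ioi (0 : ℝ), Real.exp (-x) * x ^ (a : ℝ) := by
    apply setIntegral_mono_set hIcc
    · filter_upwards [ae_restrict_mem measurableSet_Ioi] with y hy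
      have : (0:ℝ) < y := hy
      positivity
    · filter_upwards with y hy
      exact lt_trans ha0 hy.1
  refine le_trans ?_ step1
  have step2 : ∫ x in Ioc a (a + 1), (Real.exp (-(a+1)) * a ^ (a:ℝ))
      ≤ ∫ x in Ioc a (a + 1), Real.exp (-x) * x ^ (a : ℝ) := by
    apply setIntegral_mono_on
    · exact integrableOn_const (by simp)
    · exact hIcc.mono_set (fun y hy => lt_trans ha0 hy.1)
    · exact measurableSet_Ioc
    · intro y hy
      have hya : a < y := hy.1
      have hyb : y ≤ a + 1 := hy.2
      apply mul_le_mul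
      · exact Real.exp_le_exp.mpr (by linarith)
      · exact Real.rpow_le_rpow ha0.le hya.le ha0.le
      · positivity
      · positivity
  refine le_trans ?_ step2
  rw [setIntegral_const]
  rw [Real.volume_real_Ioc]
  simp

open Real MeasureTheory Set Finset in
/-- Series bound: `|J_a(2t)| ≤ t^a/Γ(a+1) · e^{2t}` for `t > 0`, `a ≥ 2`. -/
lemma aux_series_bound (a t : ℝ) (ha : 2 ≤ a) (ht : 0 < t) :
    |besselJ a (2 * t)| ≤ t ^ (a : ℝ) / Real.Gamma (a + 1) * Real.exp (2 * t) := by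
  have ha1 : (1 : ℝ) ≤ a := by linarith
  have hGa : 0 < Real.Gamma (a + 1) := Real.Gamma_pos_of_pos (by linarith)
  set c0 : ℝ := t ^ (a : ℝ) / Real.Gamma (a + 1) with hc0
  have hc0pos : 0 < c0 := by positivity
  set f : ℕ → ℝ := fun m => ((-1 : ℝ) ^ m / ((m.factorial : ℝ) * Real.Gamma ((m : ℝ) + a + 1))) *
    (2 * t / 2) ^ (2 * (m : ℝ) + a) with hf
  set g : ℕ → ℝ := fun m => c0 * ((2 * t) ^ (2 * m) / ((2 * m).factorial : ℝ)) with hg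
  have hbJ : besselJ a (2 * t) = ∑' m, f m := rfl
  have hgnonneg : ∀ m, 0 ≤ g m := by intro m; simp only [hg]; positivity
  have habs : ∀ m, |f m| ≤ g m := by
    intro m
    have hGm : 0 < Real.Gamma ((m : ℝ) + a + 1) := Real.Gamma_pos_of_pos (by positivity)
    have h2t2 : (2 : ℝ) * t / 2 = t := by ring
    have hrpow : t ^ (2 * (m : ℝ) + a) = t ^ (2 * m) * t ^ (a : ℝ) := by
      rw [show 2 * (m : ℝ) + a = ((2 * m : ℕ) : ℝ) + a by push_cast; ring,
        Real.rpow_add ht, Real.rpow_natCast]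
    have habs1 : |f m| = t ^ (2 * m) * t ^ (a : ℝ) /
        ((m.factorial : ℝ) * Real.Gamma ((m : ℝ) + a + 1)) := by
      rw [hf]
      simp only [h2t2]
      rw [abs_mul, abs_div, abs_pow, abs_neg, abs_one, one_pow,
        abs_of_pos (by positivity : (0:ℝ) < (m.factorial : ℝ) * Real.Gamma ((m : ℝ) + a + 1)),
        abs_of_pos (Real.rpow_pos_of_pos ht _), hrpow]
      ring
    rw [habs1, hg]
    show _ ≤ c0 * ((2 * t) ^ (2 * m) / ((2 * m).factorial : ℝ))
    have hkey : Real.Gamma (a + 1) * ((2 * m).factorial : ℝ) ≤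
        4 ^ m * ((m.factorial : ℝ) * Real.Gamma ((m : ℝ) + a + 1)) := by
      have h1 : ((2 * m).factorial : ℝ) ≤ (4 : ℝ) ^ m * (m.factorial : ℝ) ^ 2 := by
        exact_mod_cast aux_fact_sq m
      have h2 := aux_gamma_fact a ha1 m
      have hfm : (0:ℝ) < (m.factorial : ℝ) := by positivity
      nlinarith [hGa.le, hfm.le, pow_pos (by norm_num : (0:ℝ) < 4) m]
    have h2tpow : (2 * t) ^ (2 * m) = 4 ^ m * t ^ (2 * m) := by
      rw [mul_pow, pow_mul]; norm_num
    have hEq : c0 * ((2 * t) ^ (2 * m) / ((2 * m).factorial : ℝ))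
        = (t ^ (a:ℝ) * (4 ^ m * t ^ (2 * m))) /
          (Real.Gamma (a + 1) * ((2 * m).factorial : ℝ)) := by
      rw [hc0, h2tpow]; field_simp; try ring
    rw [hEq, div_le_div_iff₀ (by positivity) (by positivity)]
    have htp : (0:ℝ) ≤ t ^ (2 * m) * t ^ (a:ℝ) := by positivity
    nlinarith [mul_le_mul_of_nonneg_left hkey htp]
  have hpart : ∀ n, ∑ m ∈ Finset.range n, g m ≤ c0 * Real.exp (2 * t) := by
    intro n
    have h1 : ∑ m ∈ Finset.range n, (2*t)^(2*m)/(((2*m).factorial : ℕ) : ℝ)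
        ≤ ∑ i ∈ Finset.range (2*n), (2*t)^i/((i.factorial : ℕ) : ℝ) := by
      induction n with
      | zero => simp
      | succ n ih =>
        rw [Finset.sum_range_succ, show 2*(n+1) = 2*n+1+1 by ring,
          Finset.sum_range_succ, Finset.sum_range_succ]
        have hpos : (0:ℝ) ≤ (2*t)^(2*n+1)/(((2*n+1).factorial : ℕ):ℝ) := by positivity
        linarith [ih]
    calc ∑ m ∈ Finset.range n, g m
        = c0 * ∑ m ∈ Finset.range n, (2*t)^(2*m)/(((2*m).factorial : ℕ):ℝ) := by
          rw [Finset.mul_sum]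
      _ ≤ c0 * Real.exp (2*t) := by
          apply mul_le_mul_of_nonneg_left _ hc0pos.le
          exact h1.trans (Real.sum_le_exp_of_nonneg (by positivity) _)
  have hgsum : Summable g := summable_of_sum_range_le hgnonneg hpart
  have hgtsum : ∑' m, g m ≤ c0 * Real.exp (2*t) := Real.tsum_le_of_sum_range_le hgnonneg hpart
  have habssum : Summable (fun m => |f m|) :=
    Summable.of_nonneg_of_le (fun m => abs_nonneg _) habs hgsum
  calc |besselJ a (2*t)| = ‖∑' m, f m‖ := by rw [hbJ, Real.norm_eq_abs]
    _ ≤ ∑' m, ‖f m‖ := norm_tsum_le_tsum_norm (by simpa [Real.norm_eq_abs] using habssum)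
    _ = ∑' m, |f m| := by simp [Real.norm_eq_abs]
    _ ≤ ∑' m, g m := Summable.tsum_le_tsum habs habssum hgsum
    _ ≤ c0 * Real.exp (2*t) := hgtsum

open Real MeasureTheory Set Finset in
/-- Main bound with explicit constant 100. -/
lemma aux_main (a : ℝ) (ha : 2 ≤ a) (x : ℝ) (hx : 0 < x) (hx3 : x < 1 / 3) :
    |besselJ a (a * x)| ≤
      100 * Real.exp (a * (1 + Real.log (1 / 3))) * a ^ (-(1 / 3 : ℝ)) := by
  have ha0 : (0 : ℝ) < a := by linarith
  have ha1 : (1 : ℝ) ≤ a := by linarith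
  set t : ℝ := a * x / 2 with ht_def
  have ht : 0 < t := by rw [ht_def]; positivity
  have h2t : 2 * t = a * x := by rw [ht_def]; ring
  have hG := aux_gamma_lower a ha1
  have hGa : 0 < Real.Gamma (a + 1) := Real.Gamma_pos_of_pos (by linarith)
  have hx2 : (0:ℝ) < x / 2 := by positivity
  have hd : t ^ (a:ℝ) / Real.Gamma (a + 1)
      ≤ t ^ (a:ℝ) / (Real.exp (-(a + 1)) * a ^ (a:ℝ)) :=
    div_le_div_of_nonneg_left (Real.rpow_nonneg ht.le a) (by positivity) hG
  have heq : t ^ (a:ℝ) / (Real.exp (-(a + 1)) * a ^ (a:ℝ))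
      = Real.exp (Real.log (x / 2) * a) * Real.exp (a + 1) := by
    have h1 : t ^ (a:ℝ) = a ^ (a:ℝ) * (x / 2) ^ (a:ℝ) := by
      rw [show t = a * (x / 2) by rw [ht_def]; ring, Real.mul_rpow ha0.le hx2.le]
    rw [h1, Real.exp_neg, Real.rpow_def_of_pos hx2]
    have hane : a ^ (a:ℝ) ≠ 0 := (Real.rpow_pos_of_pos ha0 a).ne'
    field_simp
  have stepA : |besselJ a (a * x)|
      ≤ Real.exp (Real.log (x / 2) * a + (a + 1) + a * x) := by
    have := aux_series_bound a t ha ht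
    rw [h2t] at this
    calc |besselJ a (a * x)| ≤ t ^ (a:ℝ) / Real.Gamma (a + 1) * Real.exp (a * x) := this
      _ ≤ t ^ (a:ℝ) / (Real.exp (-(a + 1)) * a ^ (a:ℝ)) * Real.exp (a * x) :=
          mul_le_mul_of_nonneg_right hd (Real.exp_pos _).le
      _ = Real.exp (Real.log (x / 2) * a + (a + 1) + a * x) := by
          rw [heq, ← Real.exp_add, ← Real.exp_add]
  refine stepA.trans ?_
  rw [show a ^ (-(1/3 : ℝ)) = Real.exp (Real.log a * (-(1/3))) from Real.rpow_def_of_pos ha0 _]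
  have hfac : Real.log (x / 2) + x - Real.log (1 / 3) ≤ -0.35 := by
    have hl2 := Real.log_two_gt_d9
    have hlx : Real.log (x / 2) = Real.log x - Real.log 2 :=
      Real.log_div hx.ne' two_ne_zero
    have hlx2 : Real.log x ≤ Real.log (1 / 3) := Real.log_le_log hx hx3.le
    linarith
  have hloga : Real.log a ≤ a - 1 := Real.log_le_sub_one_of_pos ha0
  have hLR : Real.log (x / 2) * a + (a + 1) + a * x
      ≤ (a * (1 + Real.log (1 / 3)) + Real.log a * (-(1/3))) + 1 := by
    have hmul := mul_le_mul_of_nonneg_left hfac ha0.le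
    nlinarith [hmul, hloga, ha0]
  calc Real.exp (Real.log (x / 2) * a + (a + 1) + a * x)
      ≤ Real.exp ((a * (1 + Real.log (1 / 3)) + Real.log a * (-(1/3))) + 1) :=
        Real.exp_le_exp.mpr hLR
    _ = Real.exp (a * (1 + Real.log (1 / 3))) * Real.exp (Real.log a * (-(1/3)))
        * Real.exp 1 := by rw [← Real.exp_add, ← Real.exp_add]
    _ ≤ 100 * Real.exp (a * (1 + Real.log (1 / 3))) * Real.exp (Real.log a * (-(1/3))) := by
        have he := Real.exp_one_lt_d9
        have h1 := Real.exp_pos (a * (1 + Real.log (1 / 3)))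
        have h2 := Real.exp_pos (Real.log a * (-(1/3)))
        nlinarith [mul_pos h1 h2, mul_le_mul_of_nonneg_left he.le (mul_pos h1 h2).le]

/-- For `a ≥ 2` and `0 < x < 1/3`, `|J_a(ax)| ≤ C e^{a(1 + log(1/3))} a^{-1/3}` for an
absolute constant `C`; since `1 + log(1/3) < 0`, `a^{1/3} J_a(ax) → 0` as `a → ∞`,
uniformly in `x ∈ (0, 1/3)`. -/
theorem besselJ_decay_small_x :
    (∃ C : ℝ, 0 < C ∧ ∀ a : ℝ, 2 ≤ a → ∀ x : ℝ, 0 < x → x < 1 / 3 →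
        |besselJ a (a * x)| ≤
          C * Real.exp (a * (1 + Real.log (1 / 3))) * a ^ (-(1 / 3 : ℝ))) ∧
      ∀ ε : ℝ, 0 < ε → ∃ A : ℝ, 2 ≤ A ∧ ∀ a : ℝ, A ≤ a → ∀ x : ℝ,
        0 < x → x < 1 / 3 → a ^ ((1 : ℝ) / 3) * |besselJ a (a * x)| < ε := by
  constructor
  · exact ⟨100, by norm_num, fun a ha x hx hx3 => aux_main a ha x hx hx3⟩
  · intro ε hε
    set δ : ℝ := 1 + Real.log (1 / 3) with hδ_def
    have hδ : δ < 0 := by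
      have h3 : (1:ℝ) < Real.log 3 := by
        rw [Real.lt_log_iff_exp_lt (by norm_num : (0:ℝ) < 3)]
        have := Real.exp_one_lt_d9; linarith
      have : Real.log (1/3 : ℝ) = -Real.log 3 := by
        rw [one_div, Real.log_inv]
      rw [hδ_def, this]; linarith
    refine ⟨max 2 (Real.log (ε / 100) / δ + 1), le_max_left _ _, fun a haA x hx hx3 => ?_⟩
    have ha2 : 2 ≤ a := le_trans (le_max_left _ _) haA
    have ha0 : (0:ℝ) < a := by linarith
    have hkey := aux_main a ha2 x hx hx3
    have hpow : a ^ ((1:ℝ)/3) * a ^ (-(1/3 : ℝ)) = 1 := by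
      rw [← Real.rpow_add ha0]; norm_num
    have hbound : a ^ ((1:ℝ)/3) * |besselJ a (a * x)| ≤ 100 * Real.exp (a * δ) := by
      calc a ^ ((1:ℝ)/3) * |besselJ a (a * x)|
          ≤ a ^ ((1:ℝ)/3) * (100 * Real.exp (a * δ) * a ^ (-(1/3 : ℝ))) :=
            mul_le_mul_of_nonneg_left hkey (Real.rpow_nonneg ha0.le _)
        _ = (a ^ ((1:ℝ)/3) * a ^ (-(1/3 : ℝ))) * (100 * Real.exp (a * δ)) := by ring
        _ = 100 * Real.exp (a * δ) := by rw [hpow, one_mul]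
    have h1 : Real.log (ε / 100) / δ + 1 ≤ a := le_trans (le_max_right _ _) haA
    have h2 : Real.log (ε / 100) / δ < a := by linarith
    have h3 : a * δ < Real.log (ε / 100) := by
      have := (div_lt_iff_of_neg hδ).mp h2
      linarith
    have h4 : Real.exp (a * δ) < ε / 100 := by
      have := Real.exp_lt_exp.mpr h3
      rwa [Real.exp_log (by positivity)] at this
    linarith
end
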